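/- Let H₀ be an n×n complex diagonal matrix and let H be an n×n real diagonal matrix whose diagonal entries are pairwise distinct (a regular element). Then for x in the adjoint orbit O(H₀) = {g H₀ g⁻¹ : g ∈ GL(n,ℂ)}, one has ⁅x, H⁆ = 0 if and only if there exists a permutation σ of {1,…,n} such that x is the diagonal matrix whose i-th diagonal entry is the σ(i)-th diagonal entry of H₀. (These are exactly the singular points of the height function f_H(x) = trace(xH) on the orbit, i.e. the Weyl-group orbit of H₀.) -/

import Mathlib

open Matrix Polynomial

/-- charpoly is invariant under conjugation by a unit. -/
lemma charpoly_units_conj' {n : ℕ} {R : Type*} [CommRing R] (g : (Matrix (Fin n) (Fin n) R)ˣ)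
    (M : Matrix (Fin n) (Fin n) R) :
    ((g : Matrix (Fin n) (Fin n) R) * M * (↑g⁻¹ : Matrix (Fin n) (Fin n) R)).charpoly
      = M.charpoly := by
  let G : Matrix (Fin n) (Fin n) R[X] := (C : R →+* R[X]).mapMatrix g
  let G' : Matrix (Fin n) (Fin n) R[X] := (C : R →+* R[X]).mapMatrix (↑g⁻¹ : Matrix (Fin n) (Fin n) R)
  have hGG' : G * G' = 1 := by
    rw [show G * G' = (C : R →+* R[X]).mapMatrix ((g : Matrix (Fin n) (Fin n) R) * (↑g⁻¹ : Matrix (Fin n) (Fin n) R)) from (map_mul _ _ _).symm, Units.mul_inv]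
    simp
  have hG'G : G' * G = 1 := by
    rw [show G' * G = (C : R →+* R[X]).mapMatrix ((↑g⁻¹ : Matrix (Fin n) (Fin n) R) * (g : Matrix (Fin n) (Fin n) R)) from (map_mul _ _ _).symm, Units.inv_mul]
    simp
  have hchar : charmatrix ((g : Matrix (Fin n) (Fin n) R) * M * (↑g⁻¹ : Matrix (Fin n) (Fin n) R))
      = G * charmatrix M * G' := by
    unfold charmatrix
    have hsc : ∀ A : Matrix (Fin n) (Fin n) R[X],
        Matrix.scalar (Fin n) (X : R[X]) * A = A * Matrix.scalar (Fin n) (X : R[X]) := by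
      intro A
      rw [Matrix.scalar_commute] ; intro r; exact Polynomial.commute_X r
    rw [mul_sub, sub_mul]
    congr 1
    · rw [← hsc G, mul_assoc, hGG', mul_one]
    · simp only [G, G', RingHom.mapMatrix_apply, ← Matrix.map_mul]
  unfold Matrix.charpoly
  rw [hchar, Matrix.det_mul, Matrix.det_mul]
  have : G.det * G'.det = 1 := by rw [← Matrix.det_mul, hGG', Matrix.det_one]
  calc G.det * (charmatrix M).det * G'.det
      = G.det * G'.det * (charmatrix M).det := by ring
    _ = (charmatrix M).det := by rw [this, one_mul]

lemma charpoly_diagonal' {n : ℕ} {R : Type*} [CommRing R] (e : Fin n → R) :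
    (Matrix.diagonal e).charpoly = ∏ i : Fin n, (X - C (e i)) := by
  rw [Matrix.charpoly_of_upperTriangular _ (Matrix.blockTriangular_diagonal e)]
  simp

lemma exists_perm_of_multiset_map_eq {n : ℕ} {α : Type*} {e d : Fin n → α}
    (H : Multiset.map e Finset.univ.val = Multiset.map d Finset.univ.val) :
    ∃ σ : Equiv.Perm (Fin n), ∀ i, e i = d (σ i) := by
  classical
  have hcard : ∀ c : α, Fintype.card { i // e i = c } = Fintype.card { i // d i = c } := by
    intro c
    have h1 := congrArg (Multiset.count c) H
    rw [Multiset.count_map, Multiset.count_map] at h1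
    simp only [Fintype.card_subtype]
    simp only [Finset.card, Finset.filter] at *
    convert h1 using 2 <;> ext <;> simp [eq_comm]
  have fib : ∀ c : α, { i // e i = c } ≃ { i // d i = c } := fun c =>
    Fintype.equivOfCardEq (hcard c)
  refine ⟨Equiv.ofFiberEquiv fib, fun i => ?_⟩
  exact (Equiv.ofFiberEquiv_map fib i).symm


/-- The adjoint orbit of the diagonal matrix `H₀ = diagonal d`. -/
def adjointOrbit (n : ℕ) (d : Fin n → ℂ) : Set (Matrix (Fin n) (Fin n) ℂ) :=
  {x | ∃ g : GL (Fin n) ℂ, x = (g : Matrix (Fin n) (Fin n) ℂ) * Matrix.diagonal d *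
        ((g⁻¹ : GL (Fin n) ℂ) : Matrix (Fin n) (Fin n) ℂ)}

/-- Let `H₀ = diagonal d` be a complex diagonal matrix and `H = diagonal h` a real
regular diagonal matrix (pairwise distinct diagonal entries).  A point `x` of the
adjoint orbit `O(H₀)` satisfies `⁅x, H⁆ = 0` iff `x` is a diagonal matrix obtained from
`H₀` by permuting its diagonal entries, i.e. `x = diagonal (d ∘ σ)` for a permutation
`σ`.  These are the singular points of the height function `f_H(x) = trace (x * H)`. -/
theorem singular_points_of_height_function
    (n : ℕ) (d : Fin n → ℂ) (h : Fin n → ℝ) (hreg : Function.Injective h)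
    (x : Matrix (Fin n) (Fin n) ℂ) (hx : x ∈ adjointOrbit n d) :
    ⁅x, Matrix.diagonal (fun i => (h i : ℂ))⁆ = 0 ↔
      ∃ σ : Equiv.Perm (Fin n), x = Matrix.diagonal (fun i => d (σ i)) := by
  constructor
  · intro hc
    rw [Ring.lie_def, sub_eq_zero] at hc
    set e : Fin n → ℂ := fun i => x i i with he
    have hdiag : x = Matrix.diagonal e := by
      ext i j
      by_cases hij : i = j
      · subst hij; simp [he]
      · have h0 : x i j * (h j : ℂ) = (h i : ℂ) * x i j := by
          have := congrFun (congrFun hc i) j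
          rw [Matrix.mul_diagonal, Matrix.diagonal_mul] at this; exact this
        have h1 : x i j * ((h j : ℂ) - (h i : ℂ)) = 0 := by ring_nf; linear_combination h0
        have h2 : ((h j : ℂ) - (h i : ℂ)) ≠ 0 := by
          intro hz
          apply hij
          exact (hreg (by exact_mod_cast sub_eq_zero.mp hz)).symm
        rw [Matrix.diagonal_apply_ne _ hij]
        exact (mul_eq_zero.mp h1).resolve_right h2
    obtain ⟨g, hg⟩ := hx
    have hcp : (Matrix.diagonal e).charpoly = (Matrix.diagonal d).charpoly := by
      rw [← hdiag, hg]
      exact _root_.charpoly_units_conj' g _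
    rw [charpoly_diagonal', charpoly_diagonal'] at hcp
    have hms : Multiset.map e Finset.univ.val = Multiset.map d Finset.univ.val := by
      have hp : ∀ f : Fin n → ℂ, ∏ i : Fin n, (X - C (f i))
          = ((Multiset.map f Finset.univ.val).map (fun a => X - C a)).prod := by
        intro f
        rw [Multiset.map_map]
        rfl
      have := congrArg Polynomial.roots hcp
      rwa [hp e, hp d, Polynomial.roots_multiset_prod_X_sub_C,
        Polynomial.roots_multiset_prod_X_sub_C] at this
    obtain ⟨σ, hσ⟩ := exists_perm_of_multiset_map_eq hms
    exact ⟨σ, by rw [hdiag]; exact congrArg Matrix.diagonal (funext hσ)⟩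
  · rintro ⟨σ, rfl⟩
    rw [Ring.lie_def, Matrix.diagonal_mul_diagonal, Matrix.diagonal_mul_diagonal, sub_eq_zero]
    exact congrArg Matrix.diagonal (funext fun i => mul_comm _ _)
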